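/- Let H : ℝ^d → ℝ be convex and superlinear with conjugate H*, and let F : ℝ → (-∞,+∞] be convex, proper, equal to +∞ on negatives, with conjugate F*(a) = sup_{m≥0}(ma - F(m)). Then for every λ ∈ ℝ and ξ ∈ ℝ^d, inf over (m,w) ∈ [0,∞) × ℝ^d of [m H*(-w/m) + F(m) + ⟨ξ, w⟩ - λ m] equals -F*(λ + H(ξ)), with the convention m H*(-w/m) = +∞ if m = 0, w ≠ 0 and = 0 if m = w = 0. -/

import Mathlib

open scoped RealInnerProductSpace

lemma exists_subgradient' {E : Type*} [NormedAddCommGroup E] [InnerProductSpace ℝ E]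
    [CompleteSpace E] (H : E → ℝ) (hcont : Continuous H)
    (hconv : ConvexOn ℝ Set.univ H) (ξ : E) :
    ∃ v : E, ∀ p, (inner ℝ p v : ℝ) - H p ≤ (inner ℝ ξ v : ℝ) - H ξ := by
  have hs_open : IsOpen {z : E × ℝ | H z.1 < z.2} :=
    isOpen_lt (hcont.comp continuous_fst) continuous_snd
  have hs_conv : Convex ℝ {z : E × ℝ | H z.1 < z.2} := by
    rintro ⟨p, t⟩ hp ⟨q, u⟩ hq θ τ hθ hτ hsum
    simp only [Set.mem_setOf_eq] at hp hq
    have h1 : H (θ • p + τ • q) ≤ θ * H p + τ * H q :=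
      hconv.2 (Set.mem_univ p) (Set.mem_univ q) hθ hτ hsum
    have h2 : θ * H p + τ * H q < θ * t + τ * u := by
      rcases hθ.lt_or_eq with h | h
      · have e1 := mul_le_mul_of_nonneg_left hq.le hτ
        have e2 := mul_lt_mul_of_pos_left hp h
        linarith
      · have hτ1 : τ = 1 := by linarith
        rw [← h, hτ1]; simpa using hq
    show H (θ • p + τ • q, θ • t + τ • u).1 < (θ • p + τ • q, θ • t + τ • u).2
    simpa [smul_eq_mul] using h1.trans_lt h2
  have hmem : ((ξ, H ξ) : E × ℝ) ∉ {z : E × ℝ | H z.1 < z.2} := by simp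
  obtain ⟨f, hf⟩ := geometric_hahn_banach_open_point hs_conv hs_open hmem
  set c : ℝ := f (0, 1) with hc_def
  have hdec : ∀ (p : E) (t : ℝ), f (p, t) = f (p, 0) + t * c := by
    intro p t
    have he : ((p, t) : E × ℝ) = (p, (0:ℝ)) + t • ((0:E), (1:ℝ)) := by
      simp [Prod.ext_iff]
    rw [he, map_add, map_smul, smul_eq_mul, hc_def]
  have hc : c < 0 := by
    have h := hf (ξ, H ξ + 1) (by simp)
    rw [hdec ξ (H ξ + 1), hdec ξ (H ξ)] at h
    linarith
  have key2 : ∀ p, f (p, 0) + H p * c ≤ f (ξ, 0) + H ξ * c := by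
    intro p
    by_contra hcon
    push_neg at hcon
    set ε : ℝ := (f (p, 0) + H p * c - (f (ξ, 0) + H ξ * c)) / (-c) with hε
    have hεpos : 0 < ε := div_pos (by linarith) (by linarith)
    have h := hf (p, H p + ε) (by simp [hεpos])
    rw [hdec p (H p + ε), hdec ξ (H ξ)] at h
    have hεc : ε * -c = f (p, 0) + H p * c - (f (ξ, 0) + H ξ * c) :=
      div_mul_cancel₀ _ (by linarith : -c ≠ 0)
    nlinarith [h, hεc]
  have hcpos : 0 < -c := by linarith
  set g : E →L[ℝ] ℝ := f.comp (ContinuousLinearMap.inl ℝ E ℝ) with hg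
  set u : E := (InnerProductSpace.toDual ℝ E).symm g with hu
  have hup : ∀ p : E, (inner ℝ u p : ℝ) = f (p, 0) := by
    intro p
    rw [hu, InnerProductSpace.toDual_symm_apply]
    simp [hg]
  refine ⟨(-c)⁻¹ • u, fun p => ?_⟩
  have hinner : ∀ q : E, (inner ℝ q ((-c)⁻¹ • u) : ℝ) = (-c)⁻¹ * f (q, 0) := by
    intro q
    rw [real_inner_smul_right, real_inner_comm, hup]
  rw [hinner, hinner]
  have hkc : (-c)⁻¹ * c = -1 := by rw [inv_neg, neg_mul, inv_mul_cancel₀ hc.ne]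
  have e : ∀ x : ℝ, (-c)⁻¹ * (x * c) = -x := by
    intro x
    rw [mul_comm x c, ← mul_assoc, hkc]; ring
  have hk := mul_le_mul_of_nonneg_left (key2 p) (inv_nonneg.mpr hcpos.le)
  rw [mul_add, mul_add, e, e] at hk
  linarith

lemma ereal_neg_iSup {ι : Sort*} (f : ι → EReal) : -(⨆ i, f i) = ⨅ i, -f i := by
  apply le_antisymm
  · exact le_iInf fun i => EReal.neg_le_neg_iff.mpr (le_iSup f i)
  · rw [← EReal.neg_le_neg_iff, neg_neg]
    exact iSup_le fun i => by
      rw [← neg_neg (f i)]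
      exact EReal.neg_le_neg_iff.mpr (iInf_le _ i)

/-- The Fenchel conjugate `F*(a) = sup_{m ≥ 0} (m a - F(m))`. -/
noncomputable def fenchelPos (F : ℝ → EReal) (a : ℝ) : EReal :=
  ⨆ m : {m : ℝ // 0 ≤ m}, (((m : ℝ) * a : ℝ) : EReal) - F (m : ℝ)

/-- The pointwise infimum of `m H*(-w/m) + F(m) + ⟨ξ,w⟩ - λ m` over `(m,w) ∈ [0,∞) × ℝ^d`
equals `-F*(λ + H(ξ))`. -/
theorem pointwise_duality
    (d : ℕ) (H Hstar : EuclideanSpace ℝ (Fin d) → ℝ)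
    (hcont : Continuous H)
    (hconv : ConvexOn ℝ Set.univ H)
    (hsuper : ∀ c : ℝ, ∃ b : ℝ, ∀ p, c * ‖p‖ - b ≤ H p)
    (hHstar : ∀ q, Hstar q = ⨆ p : EuclideanSpace ℝ (Fin d), ((inner ℝ p q : ℝ) - H p))
    (F : ℝ → EReal)
    (hFconv : ∀ x y t : ℝ, 0 ≤ t → t ≤ 1 →
      F (t * x + (1 - t) * y) ≤ (t : EReal) * F x + ((1 - t : ℝ) : EReal) * F y)
    (hFnotbot : ∀ m : ℝ, F m ≠ ⊥)
    (hFproper : ∃ m : ℝ, F m ≠ ⊤)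
    (hFneg : ∀ m : ℝ, m < 0 → F m = ⊤)
    (lam : ℝ) (ξ : EuclideanSpace ℝ (Fin d))
    (Φ : ℝ × EuclideanSpace ℝ (Fin d) → EReal)
    (hΦpos : ∀ z : ℝ × EuclideanSpace ℝ (Fin d), 0 < z.1 →
      Φ z = ((z.1 * Hstar (-(z.1⁻¹ • z.2)) : ℝ) : EReal) + F z.1 +
        (((inner ℝ ξ z.2 : ℝ) - lam * z.1 : ℝ) : EReal))
    (hΦ00 : Φ (0, 0) = F 0)
    (hΦ0 : ∀ w : EuclideanSpace ℝ (Fin d), w ≠ 0 → Φ (0, w) = ⊤) :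
    (⨅ z : {z : ℝ × EuclideanSpace ℝ (Fin d) // 0 ≤ z.1}, Φ (z : ℝ × EuclideanSpace ℝ (Fin d))) =
      -(fenchelPos F (lam + H ξ)) := by
  set A : ℝ := lam + H ξ with hA
  -- boundedness of the sup defining Hstar
  have hbdd : ∀ q : EuclideanSpace ℝ (Fin d),
      BddAbove (Set.range fun p => (inner ℝ p q : ℝ) - H p) := by
    intro q
    obtain ⟨b, hb⟩ := hsuper ‖q‖
    refine ⟨b, ?_⟩
    rintro x ⟨p, rfl⟩
    have h1 := real_inner_le_norm p q
    have h2 := hb p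
    have h3 : ‖q‖ * ‖p‖ = ‖p‖ * ‖q‖ := mul_comm _ _
    simp only []
    linarith
  obtain ⟨v, hv⟩ := exists_subgradient' H hcont hconv ξ
  have hHstar_ge : ∀ q, (inner ℝ ξ q : ℝ) - H ξ ≤ Hstar q := by
    intro q
    rw [hHstar]
    exact le_ciSup (hbdd q) ξ
  have hHv : Hstar v = (inner ℝ ξ v : ℝ) - H ξ := by
    refine le_antisymm ?_ (hHstar_ge v)
    rw [hHstar]
    exact ciSup_le hv
  -- rewrite RHS
  have hneg : ∀ m : ℝ, -((((m : ℝ) * A : ℝ) : EReal) - F m)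
      = ((-(m * A) : ℝ) : EReal) + F m := by
    intro m
    rw [EReal.neg_sub (Or.inl (EReal.coe_ne_bot _)) (Or.inl (EReal.coe_ne_top _)),
      ← EReal.coe_neg]
  have comb : ∀ (x y : ℝ) (B : EReal),
      (x : EReal) + B + (y : EReal) = ((x + y : ℝ) : EReal) + B := by
    intro x y B
    rw [add_comm (x : EReal) B, add_assoc, ← EReal.coe_add, add_comm B]
  rw [fenchelPos, ereal_neg_iSup]
  apply le_antisymm
  · -- inf Φ ≤ every -(m A - F m)
    refine le_iInf ?_
    rintro ⟨m, hm⟩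
    simp only []
    rw [hneg]
    rcases hm.eq_or_lt with h0 | hmpos
    · -- m = 0
      have : (⨅ z : {z : ℝ × EuclideanSpace ℝ (Fin d) // 0 ≤ z.1},
          Φ (z : ℝ × EuclideanSpace ℝ (Fin d))) ≤ Φ (0, 0) :=
        iInf_le (fun z : {z : ℝ × EuclideanSpace ℝ (Fin d) // 0 ≤ z.1} => Φ (z : ℝ × EuclideanSpace ℝ (Fin d))) ⟨((0 : ℝ), (0 : EuclideanSpace ℝ (Fin d))), le_refl 0⟩
      rw [hΦ00] at this
      refine this.trans ?_
      rw [← h0]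
      simp
    · -- m > 0 : witness w = -(m • v)
      have hle : (⨅ z : {z : ℝ × EuclideanSpace ℝ (Fin d) // 0 ≤ z.1},
          Φ (z : ℝ × EuclideanSpace ℝ (Fin d))) ≤ Φ (m, -(m • v)) :=
        iInf_le (fun z : {z : ℝ × EuclideanSpace ℝ (Fin d) // 0 ≤ z.1} => Φ (z : ℝ × EuclideanSpace ℝ (Fin d))) ⟨(m, -(m • v)), hm⟩
      refine hle.trans ?_
      rw [hΦpos (m, -(m • v)) hmpos]
      simp only []
      have harg : -((m : ℝ)⁻¹ • (-(m • v))) = v := by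
        rw [smul_neg, neg_neg, smul_smul, inv_mul_cancel₀ hmpos.ne', one_smul]
      rw [harg, hHv]
      have hiw : (inner ℝ ξ (-(m • v)) : ℝ) = -(m * (inner ℝ ξ v : ℝ)) := by
        rw [inner_neg_right, real_inner_smul_right]
      rw [hiw, comb]
      have : m * ((inner ℝ ξ v : ℝ) - H ξ) + (-(m * (inner ℝ ξ v : ℝ)) - lam * m)
          = -(m * A) := by rw [hA]; ring
      rw [this]
  · -- every -(m A - F m) ≥ Φ z pointwise bound
    refine le_iInf ?_
    rintro ⟨⟨m, w⟩, hm⟩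
    have hm' : (0 : ℝ) ≤ m := hm
    rcases hm'.eq_or_lt with h0 | hmpos
    · by_cases hw : w = 0
      · subst hw
        subst h0
        rw [hΦ00]
        refine (iInf_le _ ⟨(0 : ℝ), le_refl 0⟩).trans ?_
        simp only []
        rw [hneg]
        simp
      · subst h0
        rw [hΦ0 w hw]
        exact le_top
    · refine (iInf_le _ ⟨m, hm⟩).trans ?_
      simp only []
      rw [hneg, hΦpos (m, w) hmpos]
      simp only []
      rw [comb]
      have hreal : -(m * A) ≤ m * Hstar (-(m⁻¹ • w)) + ((inner ℝ ξ w : ℝ) - lam * m) := by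
        have h1 := hHstar_ge (-(m⁻¹ • w))
        have hivw : (inner ℝ ξ (-(m⁻¹ • w)) : ℝ) = -(m⁻¹ * (inner ℝ ξ w : ℝ)) := by
          rw [inner_neg_right, real_inner_smul_right]
        rw [hivw] at h1
        have h2 := mul_le_mul_of_nonneg_left h1 hmpos.le
        have hexp : m * (-(m⁻¹ * (inner ℝ ξ w : ℝ)) - H ξ)
            = -(inner ℝ ξ w : ℝ) - m * H ξ := by
          field_simp
        rw [hexp] at h2
        rw [hA]
        nlinarith [h2]
      exact add_le_add_left (EReal.coe_le_coe_iff.mpr hreal) (F m)
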